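/- Let A be an integral domain that can be written as a locally finite intersection A = ⋂_{p∈Δ} A_p of localizations at primes p ∈ Δ ⊆ Spec(A) such that each A_p is v-coherent. Then A is v-coherent. -/

import Mathlib

open scoped nonZeroDivisors

section TOperation

variable (D : Type*) [CommRing D] [IsDomain D]
  (F : Type*) [Field F] [Algebra D F] [IsFractionRing D F]

/-- The `v`-operation on fractional ideals of `D`: `I^v = (D : (D : I))`. -/
noncomputable def vOp (I : FractionalIdeal D⁰ F) : FractionalIdeal D⁰ F :=
  1 / (1 / I)

/-- The `t`-operation (as a set): `N^t = ⋃ {J^v : J ⊆ N, J a finitely generated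
fractional ideal}`. -/
noncomputable def tSet (N : Submodule D F) : Set F :=
  ⋃ J ∈ {J : FractionalIdeal D⁰ F | (J : Submodule D F) ≤ N ∧ (J : Submodule D F).FG},
    (vOp D F J : Set F)

/-- The image of an integral ideal of `D` in `F`, as a `D`-submodule of `F`. -/
def idlSub (I : Ideal D) : Submodule D F :=
  ((I : FractionalIdeal D⁰ F) : Submodule D F)

/-- A (nonzero) ideal `I` of `D` is a `t`-ideal if `I^t = I`. -/
def IsTIdeal (I : Ideal D) : Prop :=
  I ≠ 0 ∧ tSet D F (idlSub D F I) = (idlSub D F I : Set F)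

/-- A (nonzero) ideal `I` of `D` is `t`-finite if `J^t = I^t` for some finitely
generated (nonzero) ideal `J`. -/
def IsTFinite (I : Ideal D) : Prop :=
  I ≠ 0 ∧ ∃ J : Ideal D, J ≠ 0 ∧ J.FG ∧ tSet D F (idlSub D F J) = tSet D F (idlSub D F I)

/-- An ideal of `D` is `t`-maximal if it is maximal among proper `t`-ideals. -/
def IsTMaximal (M : Ideal D) : Prop :=
  M ≠ ⊤ ∧ IsTIdeal D F M ∧ ∀ J : Ideal D, J ≠ ⊤ → IsTIdeal D F J → M ≤ J → J = M

/-- `D` has the `t`-finite character if every nonzero element of `D` lies in only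
finitely many `t`-maximal ideals. -/
def HasTFiniteCharacter : Prop :=
  ∀ a : D, a ≠ 0 → {M : Ideal D | IsTMaximal D F M ∧ a ∈ M}.Finite

/-- A (nonzero) ideal `I` of `D` is `t`-invertible if `(I·I⁻¹)^t = D`, where
`I⁻¹ = (D : I)`. -/
def IsTInvertible (I : Ideal D) : Prop :=
  I ≠ 0 ∧ tSet D F
      (((I : FractionalIdeal D⁰ F) * (1 / (I : FractionalIdeal D⁰ F)) :
        FractionalIdeal D⁰ F) : Submodule D F) =
    (((1 : FractionalIdeal D⁰ F) : Submodule D F) : Set F)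

/-- `D` is `v`-coherent: for every nonzero finitely generated ideal `I`,
`I⁻¹ = J^v` for some finitely generated (nonzero) fractional ideal `J`. -/
def IsVCoherent : Prop :=
  ∀ I : Ideal D, I ≠ 0 → I.FG →
    ∃ J : FractionalIdeal D⁰ F, J ≠ 0 ∧ (J : Submodule D F).FG ∧
      1 / (I : FractionalIdeal D⁰ F) = vOp D F J

/-- `D` is a PvMD if every nonzero finitely generated ideal of `D` is `t`-invertible. -/
def IsPvMD : Prop :=
  ∀ I : Ideal D, I ≠ 0 → I.FG → IsTInvertible D F I

/-- `D` is a GCD domain: any two elements have a greatest common divisor. -/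
def IsGCDDomain (D : Type*) [CommRing D] [IsDomain D] : Prop :=
  ∀ a b : D, ∃ d : D, d ∣ a ∧ d ∣ b ∧ ∀ c : D, c ∣ a → c ∣ b → c ∣ d

end TOperation

variable (A : Type*) [CommRing A] [IsDomain A]
  (K : Type*) [Field K] [Algebra A K] [IsFractionRing A K]

/-- The localization `A_p` of `A` at a prime ideal `p`, realized as a subalgebra of the
quotient field `K` of `A`. -/
@[reducible] noncomputable def locAt (p : Ideal A) (hp : p.IsPrime) : Subalgebra A K :=
  Localization.subalgebra K (@Ideal.primeCompl A _ p hp)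
    (@Ideal.primeCompl_le_nonZeroDivisors A _ _ p hp)

section Aux
variable {D : Type*} [CommRing D] [IsDomain D]
  {F : Type*} [Field F] [Algebra D F] [IsFractionRing D F]

theorem auxV_one_div_ne_zero {J : FractionalIdeal D⁰ F} (hJ : J ≠ 0) :
    1 / J ≠ 0 := by
  obtain ⟨d, hd, hdi⟩ := J.isFractional
  have hmem : algebraMap D F d ∈ 1 / J := by
    rw [FractionalIdeal.mem_div_iff_of_ne_zero hJ]
    intro y hy
    obtain ⟨c, hc⟩ := hdi y hy
    rw [Algebra.smul_def] at hc
    exact (FractionalIdeal.mem_one_iff _).mpr ⟨c, hc⟩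
  intro h0
  rw [h0] at hmem
  have h1 : algebraMap D F d = 0 := by simpa using hmem
  exact IsFractionRing.to_map_ne_zero_of_mem_nonZeroDivisors hd h1

theorem auxV_ne_zero_of_le {J J' : FractionalIdeal D⁰ F} (hJ : J ≠ 0) (h : J ≤ J') :
    J' ≠ 0 := fun e => hJ (le_antisymm (e ▸ h) (FractionalIdeal.zero_le J))

theorem auxV_le_one_div_one_div {J : FractionalIdeal D⁰ F} (hJ : J ≠ 0) :
    J ≤ 1 / (1 / J) := by
  rw [FractionalIdeal.le_div_iff_of_ne_zero (auxV_one_div_ne_zero hJ)]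
  intro x hx y hy
  rw [FractionalIdeal.mem_div_iff_of_ne_zero hJ] at hy
  rw [mul_comm]
  exact hy x hx

theorem auxV_div_antitone {J J' : FractionalIdeal D⁰ F} (hJ : J ≠ 0) (h : J ≤ J') :
    1 / J' ≤ 1 / J := by
  rw [FractionalIdeal.le_div_iff_of_ne_zero hJ]
  intro x hx y hy
  rw [FractionalIdeal.mem_div_iff_of_ne_zero (auxV_ne_zero_of_le hJ h)] at hx
  exact hx y (h hy)

theorem auxV_triple_div {J : FractionalIdeal D⁰ F} (hJ : J ≠ 0) :
    1 / (1 / (1 / J)) = 1 / J :=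
  le_antisymm (auxV_div_antitone hJ (auxV_le_one_div_one_div hJ))
    (auxV_le_one_div_one_div (auxV_one_div_ne_zero hJ))

end Aux

set_option maxHeartbeats 2000000 in
/-- Let `A` be an integral domain that is a locally finite intersection
`A = ⋂_{p∈Δ} A_p` of localizations at primes `p ∈ Δ`, with each `A_p` `v`-coherent.
Then `A` is `v`-coherent. -/
theorem vCoherent_of_locally_finite_intersection_of_vCoherent
    {A : Type*} [CommRing A] [IsDomain A]
    {K : Type*} [Field K] [Algebra A K] [IsFractionRing A K]
    (Δ : Set (Ideal A)) (hΔ : ∀ p ∈ Δ, p.IsPrime)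
    (hint : (⋂ (p : Ideal A), ⋂ (h : p ∈ Δ), ((locAt A K p (hΔ p h) : Subalgebra A K) : Set K))
      = Set.range (algebraMap A K))
    (hlf : ∀ a : A, a ≠ 0 →
      {p : Ideal A | ∃ h : p ∈ Δ,
        ¬IsUnit (algebraMap A (locAt A K p (hΔ p h)) a)}.Finite)
    (hcoh : ∀ (p : Ideal A) (hp : p.IsPrime), p ∈ Δ → IsVCoherent (locAt A K p hp) K) :
    IsVCoherent A K := by
  classical
  intro I hI hIfg
  obtain ⟨a, haI, ha⟩ := (Submodule.ne_bot_iff I).mp (by simpa using hI)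
  obtain ⟨GI, hGI⟩ := id hIfg
  have hIne : (I : FractionalIdeal A⁰ K) ≠ 0 := by
    rw [FractionalIdeal.coeIdeal_ne_zero]
    simpa using hI
  have hTne : (1 : FractionalIdeal A⁰ K) / (I : FractionalIdeal A⁰ K) ≠ 0 :=
    auxV_one_div_ne_zero hIne
  -- elements of (1 : FractionalIdeal A⁰ K) lie in every Ap
  have hrange : ∀ (p : Ideal A) (h : p ∈ Δ), ∀ z : K,
      z ∈ (1 : FractionalIdeal A⁰ K) → z ∈ locAt A K p (hΔ p h) := by
    intro p h z hz
    obtain ⟨c, hc⟩ := (FractionalIdeal.mem_one_iff _).mp hz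
    rw [← hc, IsScalarTower.algebraMap_apply A ↥(locAt A K p (hΔ p h)) K]
    exact SetLike.coe_mem _
  have hone : (1 : K) ∈ (1 : FractionalIdeal A⁰ K) / (I : FractionalIdeal A⁰ K) := by
    rw [FractionalIdeal.mem_div_iff_of_ne_zero hIne]
    intro y hy
    obtain ⟨i, hiI, hiy⟩ := (FractionalIdeal.mem_coeIdeal _).mp hy
    rw [one_mul, ← hiy]
    exact (FractionalIdeal.mem_one_iff _).mpr ⟨i, rfl⟩
  -- the key local construction
  have key : ∀ (p : Ideal A) (h : p ∈ Δ), ∃ E : Set K, E.Finite ∧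
      (∀ e ∈ E, e ∈ (1 : FractionalIdeal A⁰ K) / (I : FractionalIdeal A⁰ K)) ∧
      ∀ x : K, (∀ e ∈ E, x * e ∈ locAt A K p (hΔ p h)) →
        ∀ t ∈ (1 : FractionalIdeal A⁰ K) / (I : FractionalIdeal A⁰ K),
          x * t ∈ locAt A K p (hΔ p h) := by
    intro p h
    haveI hpP : p.IsPrime := hΔ p h
    set Ap := locAt A K p (hΔ p h) with hApdef
    have hAK : ∀ c : A, ((algebraMap A ↥Ap c : ↥Ap) : K) = algebraMap A K c := fun c =>
      (IsScalarTower.algebraMap_apply A ↥Ap K c).symm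
    have hmapinj : Function.Injective (algebraMap A ↥Ap) := by
      intro u v huv
      have h2 := congrArg (algebraMap ↥Ap K) huv
      rw [← IsScalarTower.algebraMap_apply, ← IsScalarTower.algebraMap_apply] at h2
      exact IsFractionRing.injective A K h2
    have hIpne : I.map (algebraMap A ↥Ap) ≠ 0 := by
      intro h0
      have hm : algebraMap A ↥Ap a ∈ I.map (algebraMap A ↥Ap) := Ideal.mem_map_of_mem _ haI
      rw [h0] at hm
      have : algebraMap A ↥Ap a = 0 := by simpa using hm
      exact ha (hmapinj (by rw [this, map_zero]))
    have hIpcne : ((I.map (algebraMap A ↥Ap) : Ideal ↥Ap) : FractionalIdeal (↥Ap)⁰ K) ≠ 0 := by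
      rw [FractionalIdeal.coeIdeal_ne_zero]
      simpa using hIpne
    obtain ⟨Jp, hJp0, hJpfg, hJpeq⟩ :=
      hcoh p (hΔ p h) h (I.map (algebraMap A ↥Ap)) hIpne (hIfg.map _)
    obtain ⟨Gp, hGpfin, hGpspan⟩ := Submodule.fg_def.mp hJpfg
    have hmem1 : ∀ z : K, z ∈ (1 : FractionalIdeal (↥Ap)⁰ K) ↔ z ∈ Ap := by
      intro z
      constructor
      · intro hz
        obtain ⟨c, hc⟩ := (FractionalIdeal.mem_one_iff _).mp hz
        exact hc ▸ SetLike.coe_mem c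
      · intro hz
        exact (FractionalIdeal.mem_one_iff _).mpr ⟨⟨z, hz⟩, rfl⟩
    have hsurj : ∀ z : K, z ∈ Ap → ∃ (c s : A), s ∈ p.primeCompl ∧
        z * algebraMap A K s = algebraMap A K c := by
      intro z hz
      obtain ⟨⟨c, s⟩, hcs⟩ := IsLocalization.surj (M := p.primeCompl) (S := ↥Ap) ⟨z, hz⟩
      refine ⟨c, s, s.2, ?_⟩
      have h2 := congrArg (algebraMap ↥Ap K) hcs
      rw [map_mul, ← IsScalarTower.algebraMap_apply, ← IsScalarTower.algebraMap_apply] at h2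
      exact h2
    have hGpsub : ∀ g ∈ Gp, g ∈ (1 : FractionalIdeal (↥Ap)⁰ K) /
        ((I.map (algebraMap A ↥Ap) : Ideal ↥Ap) : FractionalIdeal (↥Ap)⁰ K) := by
      intro g hg
      rw [hJpeq]
      have hgJp : g ∈ Jp := FractionalIdeal.mem_coe.mp (hGpspan ▸ Submodule.subset_span hg)
      exact auxV_le_one_div_one_div hJp0 hgJp
    -- scale each generator into (1 : _) / I
    have hscale : ∀ g ∈ Gp, ∃ s : A, s ∈ p.primeCompl ∧
        algebraMap A K s * g ∈ (1 : FractionalIdeal A⁰ K) / (I : FractionalIdeal A⁰ K) := by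
      intro g hg
      have hgdiv := hGpsub g hg
      rw [FractionalIdeal.mem_div_iff_of_ne_zero hIpcne] at hgdiv
      have hstep : ∀ i ∈ GI, ∃ (c s : A), s ∈ p.primeCompl ∧
          (g * algebraMap A K i) * algebraMap A K s = algebraMap A K c := by
        intro i hi
        have hiI : i ∈ I := hGI ▸ Ideal.subset_span hi
        have hmem : algebraMap ↥Ap K (algebraMap A ↥Ap i) ∈
            ((I.map (algebraMap A ↥Ap) : Ideal ↥Ap) : FractionalIdeal (↥Ap)⁰ K) :=
          (FractionalIdeal.mem_coeIdeal _).mpr ⟨_, Ideal.mem_map_of_mem _ hiI, rfl⟩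
        have h2 := hgdiv _ hmem
        rw [← IsScalarTower.algebraMap_apply] at h2
        exact hsurj _ ((hmem1 _).mp h2)
      choose! cf sf hsfmem hsfeq using hstep
      refine ⟨∏ i ∈ GI, sf i, Submonoid.prod_mem _ (fun i hi => hsfmem i hi), ?_⟩
      rw [FractionalIdeal.mem_div_iff_of_ne_zero hIne]
      intro y hy
      obtain ⟨j, hjI, hjy⟩ := (FractionalIdeal.mem_coeIdeal _).mp hy
      have hIle : I ≤ Submodule.comap
          (((LinearMap.mul K K (algebraMap A K (∏ i ∈ GI, sf i) * g)).restrictScalars A) ∘ₗ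
            Algebra.linearMap A K)
          ((1 : FractionalIdeal A⁰ K) : Submodule A K) := by
        rw [← hGI, Ideal.span_le]
        intro i hi
        simp only [SetLike.mem_coe, Submodule.mem_comap, LinearMap.coe_comp,
          Function.comp_apply, Algebra.linearMap_apply, LinearMap.coe_restrictScalars,
          LinearMap.mul_apply']
        refine FractionalIdeal.mem_coe.mpr ((FractionalIdeal.mem_one_iff _).mpr
          ⟨(∏ j ∈ GI.erase i, sf j) * cf i, ?_⟩)
        have he := hsfeq i hi
        have hprod : (∏ j ∈ GI, sf j) = sf i * ∏ j ∈ GI.erase i, sf j :=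
          (Finset.mul_prod_erase _ _ hi).symm
        rw [map_mul, ← he, hprod, map_mul]
        ring
      have := hIle hjI
      simp only [Submodule.mem_comap, LinearMap.coe_comp, Function.comp_apply,
        Algebra.linearMap_apply, LinearMap.coe_restrictScalars, LinearMap.mul_apply'] at this
      rw [← hjy]
      exact FractionalIdeal.mem_coe.mp this
    choose! sfun hsmem hsT using hscale
    refine ⟨(fun g => algebraMap A K (sfun g) * g) '' Gp, hGpfin.image _, ?_, ?_⟩
    · rintro e ⟨g, hg, rfl⟩
      exact hsT g hg
    · intro x hx t ht
      -- x * g ∈ Ap for every generator g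
      have step0 : ∀ g ∈ Gp, x * g ∈ Ap := by
        intro g hg
        have hx' := hx _ ⟨g, hg, rfl⟩
        have hu : IsUnit (algebraMap A ↥Ap (sfun g)) :=
          IsLocalization.map_units (S := ↥Ap) ⟨sfun g, hsmem g hg⟩
        have hinv : ((↑(hu.unit⁻¹) : ↥Ap) : K) * algebraMap A K (sfun g) = 1 := by
          have h3 : (↑(hu.unit⁻¹) : ↥Ap) * (algebraMap A ↥Ap (sfun g)) = 1 :=
            hu.val_inv_mul
          calc ((↑(hu.unit⁻¹) : ↥Ap) : K) * algebraMap A K (sfun g)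
              = ((↑(hu.unit⁻¹) * algebraMap A ↥Ap (sfun g) : ↥Ap) : K) := by
                rw [MulMemClass.coe_mul, hAK]
            _ = ((1 : ↥Ap) : K) := by rw [h3]
            _ = 1 := by simp
        have heq : ((↑(hu.unit⁻¹) : ↥Ap) : K) * (x * (algebraMap A K (sfun g) * g)) = x * g := by
          calc ((↑(hu.unit⁻¹) : ↥Ap) : K) * (x * (algebraMap A K (sfun g) * g))
              = (((↑(hu.unit⁻¹) : ↥Ap) : K) * algebraMap A K (sfun g)) * (x * g) := by ring
            _ = x * g := by rw [hinv, one_mul]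
        rw [← heq]
        exact Subalgebra.mul_mem _ (SetLike.coe_mem _) hx'
      -- x * y ∈ Ap for every y ∈ Jp
      have step1 : (Jp : Submodule ↥Ap K) ≤ Submodule.comap
          ((LinearMap.mul K K x).restrictScalars ↥Ap)
          ((1 : FractionalIdeal (↥Ap)⁰ K) : Submodule ↥Ap K) := by
        rw [← hGpspan, Submodule.span_le]
        intro g hg
        simp only [SetLike.mem_coe, Submodule.mem_comap, LinearMap.coe_restrictScalars,
          LinearMap.mul_apply']
        exact FractionalIdeal.mem_coe.mpr ((hmem1 _).mpr (step0 g hg))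
      -- x ∈ 1 / (1 / Ip)
      have hx3 : x ∈ (1 : FractionalIdeal (↥Ap)⁰ K) /
          ((1 : FractionalIdeal (↥Ap)⁰ K) /
            ((I.map (algebraMap A ↥Ap) : Ideal ↥Ap) : FractionalIdeal (↥Ap)⁰ K)) := by
        have e : (1 : FractionalIdeal (↥Ap)⁰ K) /
            ((1 : FractionalIdeal (↥Ap)⁰ K) /
              ((I.map (algebraMap A ↥Ap) : Ideal ↥Ap) : FractionalIdeal (↥Ap)⁰ K)) = 1 / Jp := by
          rw [hJpeq]
          exact auxV_triple_div hJp0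
        rw [e, FractionalIdeal.mem_div_iff_of_ne_zero hJp0]
        intro y hy
        have := step1 (FractionalIdeal.mem_coe.mpr hy)
        simp only [Submodule.mem_comap, LinearMap.coe_restrictScalars,
          LinearMap.mul_apply'] at this
        exact FractionalIdeal.mem_coe.mp this
      -- t ∈ 1 / Ip
      have ht2 : t ∈ (1 : FractionalIdeal (↥Ap)⁰ K) /
          ((I.map (algebraMap A ↥Ap) : Ideal ↥Ap) : FractionalIdeal (↥Ap)⁰ K) := by
        rw [FractionalIdeal.mem_div_iff_of_ne_zero hIpcne]
        intro y hy
        obtain ⟨b, hb, hby⟩ := (FractionalIdeal.mem_coeIdeal _).mp hy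
        have hIple : I.map (algebraMap A ↥Ap) ≤ Submodule.comap
            (((LinearMap.mul K K t).restrictScalars ↥Ap) ∘ₗ Algebra.linearMap ↥Ap K)
            ((1 : FractionalIdeal (↥Ap)⁰ K) : Submodule ↥Ap K) := by
          rw [Ideal.map, Ideal.span_le]
          rintro _ ⟨i, hiI, rfl⟩
          simp only [SetLike.mem_coe, Submodule.mem_comap, LinearMap.coe_comp,
            Function.comp_apply, Algebra.linearMap_apply, LinearMap.coe_restrictScalars,
            LinearMap.mul_apply']
          rw [← IsScalarTower.algebraMap_apply]
          have hta := (FractionalIdeal.mem_div_iff_of_ne_zero hIne).mp ht _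
            ((FractionalIdeal.mem_coeIdeal _).mpr ⟨i, hiI, rfl⟩)
          exact FractionalIdeal.mem_coe.mpr ((hmem1 _).mpr (hrange p h _ hta))
        have := hIple hb
        simp only [Submodule.mem_comap, LinearMap.coe_comp, Function.comp_apply,
          Algebra.linearMap_apply, LinearMap.coe_restrictScalars,
          LinearMap.mul_apply'] at this
        rw [← hby]
        exact FractionalIdeal.mem_coe.mp this
      have := (FractionalIdeal.mem_div_iff_of_ne_zero (auxV_one_div_ne_zero hIpcne)).mp hx3 t ht2
      exact (hmem1 _).mp this
  -- assemble the global finitely generated ideal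
  choose E' hEfin hEsub hEkey using key
  have hSSfin : {p : Ideal A | ∃ h : p ∈ Δ,
      ¬IsUnit (algebraMap A (locAt A K p (hΔ p h)) a)}.Finite := hlf a ha
  set SS : Set (Ideal A) := {p : Ideal A | ∃ h : p ∈ Δ,
      ¬IsUnit (algebraMap A (locAt A K p (hΔ p h)) a)} with hSS
  set Efun : Ideal A → Set K := fun p => if h : p ∈ Δ then E' p h else ∅ with hEfun
  set G : Set K := insert 1 (⋃ p ∈ SS, Efun p) with hGdef
  have hGfin : G.Finite := by
    refine Set.Finite.insert _ (Set.Finite.biUnion hSSfin (fun p hp => ?_))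
    obtain ⟨h, -⟩ := hp
    simp only [hEfun, dif_pos h]
    exact hEfin p h
  have hWfg : (Submodule.span A G).FG := Submodule.fg_span hGfin
  have hWfrac : IsFractional A⁰ (Submodule.span A G) := FractionalIdeal.isFractional_of_fg hWfg
  set J : FractionalIdeal A⁰ K := ⟨Submodule.span A G, hWfrac⟩ with hJdef
  have hJne : J ≠ 0 := by
    intro h0
    have h1 : (1 : K) ∈ Submodule.span A G := Submodule.subset_span (Set.mem_insert _ _)
    have h2 : (1 : K) ∈ J := FractionalIdeal.mem_coe.mp h1
    rw [h0] at h2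
    exact one_ne_zero ((FractionalIdeal.mem_zero_iff _).mp h2)
  refine ⟨J, hJne, hWfg, ?_⟩
  have hGsubT : ∀ e ∈ G, e ∈ (1 : FractionalIdeal A⁰ K) / (I : FractionalIdeal A⁰ K) := by
    intro e he
    rcases he with rfl | he
    · exact hone
    · obtain ⟨p, hpm⟩ := Set.mem_iUnion.mp he
      obtain ⟨hpSS, hep⟩ := Set.mem_iUnion.mp hpm
      obtain ⟨h, -⟩ := hpSS
      rw [hEfun] at hep
      simp only [dif_pos h] at hep
      exact hEsub p h e hep
  have hJT : J ≤ (1 : FractionalIdeal A⁰ K) / (I : FractionalIdeal A⁰ K) := by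
    rw [← FractionalIdeal.coe_le_coe]
    show Submodule.span A G ≤ _
    rw [Submodule.span_le]
    intro e he
    exact FractionalIdeal.mem_coe.mpr (hGsubT e he)
  show (1 : FractionalIdeal A⁰ K) / (I : FractionalIdeal A⁰ K) = 1 / (1 / J)
  apply le_antisymm
  · rw [FractionalIdeal.le_div_iff_of_ne_zero (auxV_one_div_ne_zero hJne)]
    intro t ht x hx
    rw [FractionalIdeal.mem_div_iff_of_ne_zero hJne] at hx
    have hall : ∀ (p : Ideal A) (h : p ∈ Δ), x * t ∈ locAt A K p (hΔ p h) := by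
      intro p h
      by_cases hu : IsUnit (algebraMap A ↥(locAt A K p (hΔ p h)) a)
      · -- x, t ∈ Ap directly
        have h1K : (1 : K) ∈ J := FractionalIdeal.mem_coe.mp
          (Submodule.subset_span (Set.mem_insert _ _))
        have hxA : x ∈ locAt A K p (hΔ p h) := by
          have hx1 := hx 1 h1K
          rw [mul_one] at hx1
          exact hrange p h x hx1
        have hAK : ∀ c : A, ((algebraMap A ↥(locAt A K p (hΔ p h)) c :
            ↥(locAt A K p (hΔ p h))) : K) = algebraMap A K c := fun c =>
          (IsScalarTower.algebraMap_apply A ↥(locAt A K p (hΔ p h)) K c).symm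
        have htA : t ∈ locAt A K p (hΔ p h) := by
          have hta : t * algebraMap A K a ∈ (1 : FractionalIdeal A⁰ K) :=
            (FractionalIdeal.mem_div_iff_of_ne_zero hIne).mp ht _
              ((FractionalIdeal.mem_coeIdeal _).mpr ⟨a, haI, rfl⟩)
          have htaA := hrange p h _ hta
          have hinv : ((↑(hu.unit⁻¹) : ↥(locAt A K p (hΔ p h))) : K) *
              algebraMap A K a = 1 := by
            have h3 : (↑(hu.unit⁻¹) : ↥(locAt A K p (hΔ p h))) *
                (algebraMap A ↥(locAt A K p (hΔ p h)) a) = 1 :=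
              hu.val_inv_mul
            calc ((↑(hu.unit⁻¹) : ↥(locAt A K p (hΔ p h))) : K) * algebraMap A K a
                = ((↑(hu.unit⁻¹) * algebraMap A ↥(locAt A K p (hΔ p h)) a :
                    ↥(locAt A K p (hΔ p h))) : K) := by rw [MulMemClass.coe_mul, hAK]
              _ = ((1 : ↥(locAt A K p (hΔ p h))) : K) := by rw [h3]
              _ = 1 := by simp
          have heq : ((↑(hu.unit⁻¹) : ↥(locAt A K p (hΔ p h))) : K) *
              (t * algebraMap A K a) = t := by
            calc ((↑(hu.unit⁻¹) : ↥(locAt A K p (hΔ p h))) : K) * (t * algebraMap A K a)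
                = (((↑(hu.unit⁻¹) : ↥(locAt A K p (hΔ p h))) : K) *
                    algebraMap A K a) * t := by ring
              _ = t := by rw [hinv, one_mul]
          rw [← heq]
          exact Subalgebra.mul_mem _ (SetLike.coe_mem _) htaA
        exact Subalgebra.mul_mem _ hxA htA
      · have hpSS : p ∈ SS := ⟨h, hu⟩
        refine hEkey p h x ?_ t ht
        intro e hep
        have heG : e ∈ G := by
          rw [hGdef]
          refine Set.mem_insert_iff.mpr (Or.inr ?_)
          refine Set.mem_iUnion.mpr ⟨p, Set.mem_iUnion.mpr ⟨hpSS, ?_⟩⟩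
          rw [hEfun]
          simpa only [dif_pos h] using hep
        have heJ : e ∈ J := FractionalIdeal.mem_coe.mp (Submodule.subset_span heG)
        exact hrange p h _ (hx e heJ)
    have hmem : x * t ∈ Set.range (algebraMap A K) := by
      rw [← hint]
      exact Set.mem_iInter.mpr fun p => Set.mem_iInter.mpr fun h => hall p h
    obtain ⟨c, hc⟩ := hmem
    rw [mul_comm]
    exact (FractionalIdeal.mem_one_iff _).mpr ⟨c, hc⟩
  · have h1 : (1 : FractionalIdeal A⁰ K) / ((1 : FractionalIdeal A⁰ K) /
        (I : FractionalIdeal A⁰ K)) ≤ 1 / J := auxV_div_antitone hJne hJT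
    have h2 : (1 : FractionalIdeal A⁰ K) / (1 / J) ≤
        1 / ((1 : FractionalIdeal A⁰ K) / ((1 : FractionalIdeal A⁰ K) /
          (I : FractionalIdeal A⁰ K))) :=
      auxV_div_antitone (auxV_one_div_ne_zero hTne) h1
    calc (1 : FractionalIdeal A⁰ K) / (1 / J)
        ≤ 1 / ((1 : FractionalIdeal A⁰ K) / ((1 : FractionalIdeal A⁰ K) /
          (I : FractionalIdeal A⁰ K))) := h2
      _ = (1 : FractionalIdeal A⁰ K) / (I : FractionalIdeal A⁰ K) := auxV_triple_div hIne
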